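/- (Dixon's identity) For every positive integer n, ∑_{k=−n}^{n} (−1)^k · (C(2n, n+k))^3 = (3n)! / (n!)^3, where C(2n, n+k) denotes the binomial coefficient '2n choose n+k'. -/

import Mathlib

open Finset
set_option maxHeartbeats 2000000

/-- The polynomial part of the WZ certificate (times 2). -/
noncomputable def Q2 (N K : ℚ) : ℚ :=
  (-116 + 207*K - 147*K^2 + 48*K^3 - 6*K^4)
  + N * (-784 + 1113*K - 594*K^2 + 132*K^3 - 9*K^4)
  + N^2 * (-2084 + 2214*K - 792*K^2 + 90*K^3)
  + N^3 * (-2728 + 1932*K - 348*K^2)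
  + N^4 * (-1760 + 624*K)
  + N^5 * (-448)

/-- The WZ certificate function. -/
noncomputable def g (n : ℕ) : ℕ → ℚ
  | 0 => 0
  | (k+1) => (-1)^(k+1) * ((2*n+1).choose k : ℚ)^3 * Q2 n (k+1) / (2*(2*(n:ℚ)+1)^3)

noncomputable def a (n : ℕ) : ℚ := ∑ k ∈ range (2*n+1), (-1)^k * ((2*n).choose k : ℚ)^3

lemma key (n k : ℕ) :
    ((n:ℚ)+1)^2 * (-1)^k * ((2*n+2).choose k : ℚ)^3
      + 3*(3*(n:ℚ)+1)*(3*(n:ℚ)+2) * (-1)^k * ((2*n).choose k : ℚ)^3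
    = g n (k+1) - g n k := by
  have h2n1 : (2*(n:ℚ)+1) ≠ 0 := by positivity
  rcases Nat.eq_zero_or_pos k with rfl | hk1
  · -- k = 0
    simp only [g, pow_zero, Nat.choose_zero_right, Nat.cast_one, Nat.cast_ofNat]
    push_cast
    rw [sub_zero]
    field_simp
    unfold Q2
    ring
  rcases le_or_gt k (2*n) with hk | hk
  · -- main case 1 ≤ k ≤ 2n
    obtain ⟨j, rfl⟩ := Nat.exists_eq_succ_of_ne_zero (show k ≠ 0 by omega)
    set k := j + 1 with hkdef
    have hkle : k ≤ 2*n := hk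
    -- relations
    have h1 : ((2*n).choose k : ℚ) * (2*(n:ℚ)+1) = ((2*n+1).choose k : ℚ) * (2*(n:ℚ)+1-k) := by
      have := Nat.choose_mul_succ_eq (2*n) k
      have hcast : ((2*n+1-k : ℕ) : ℚ) = 2*(n:ℚ)+1-k := by
        rw [Nat.cast_sub (by omega)]; push_cast; ring
      calc ((2*n).choose k : ℚ) * (2*(n:ℚ)+1)
          = (((2*n).choose k * (2*n+1) : ℕ) : ℚ) := by push_cast; ring
        _ = (((2*n+1).choose k * (2*n+1-k) : ℕ) : ℚ) := by rw [this]
        _ = ((2*n+1).choose k : ℚ) * (2*(n:ℚ)+1-k) := by push_cast [Nat.cast_sub (show k ≤ 2*n+1 by omega)]; ring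
    have h3 : ((2*n+2).choose k : ℚ) * (2*(n:ℚ)+2-k) = ((2*n+1).choose k : ℚ) * (2*(n:ℚ)+2) := by
      have := Nat.choose_mul_succ_eq (2*n+1) k
      calc ((2*n+2).choose k : ℚ) * (2*(n:ℚ)+2-k)
          = (((2*n+1+1).choose k * (2*n+1+1-k) : ℕ) : ℚ) := by
            push_cast [Nat.cast_sub (show k ≤ 2*n+1+1 by omega)]; ring
        _ = (((2*n+1).choose k * (2*n+1+1) : ℕ) : ℚ) := by rw [← this]
        _ = ((2*n+1).choose k : ℚ) * (2*(n:ℚ)+2) := by push_cast; ring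
    have h0 : ((2*n+1).choose k : ℚ) * k = ((2*n+1).choose j : ℚ) * (2*(n:ℚ)+2-k) := by
      have := Nat.choose_succ_right_eq (2*n+1) j
      calc ((2*n+1).choose k : ℚ) * k
          = (((2*n+1).choose (j+1) * (j+1) : ℕ) : ℚ) := by push_cast [hkdef]; ring
        _ = (((2*n+1).choose j * (2*n+1-j) : ℕ) : ℚ) := by rw [this]
        _ = ((2*n+1).choose j : ℚ) * (2*(n:ℚ)+2-k) := by
            push_cast [Nat.cast_sub (show j ≤ 2*n+1 by omega), hkdef]; ring
    have hd : (2*(n:ℚ)+2-k) ≠ 0 := by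
      have : (k:ℚ) ≤ 2*n := by exact_mod_cast hkle
      intro h; nlinarith
    -- solve for c1, c3, c0
    have e1 : ((2*n).choose k : ℚ) = ((2*n+1).choose k : ℚ) * (2*(n:ℚ)+1-k) / (2*(n:ℚ)+1) := by
      field_simp; linarith [h1]
    have e3 : ((2*n+2).choose k : ℚ) = ((2*n+1).choose k : ℚ) * (2*(n:ℚ)+2) / (2*(n:ℚ)+2-k) := by
      rw [eq_div_iff hd]; linarith [h3]
    have e0 : ((2*n+1).choose j : ℚ) = ((2*n+1).choose k : ℚ) * k / (2*(n:ℚ)+2-k) := by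
      rw [eq_div_iff hd]; linarith [h0]
    show _ = g n (k+1) - g n (j+1)
    simp only [g]
    rw [e1, e3, e0]
    push_cast at hd ⊢
    unfold Q2
    have hsj : j.succ = k := rfl
    have hj : (j:ℚ) = k - 1 := by rw [hkdef]; push_cast; ring
    rw [hsj, hj]
    set m : ℚ := 2*(n:ℚ)+2-k with hm
    have hk' : (k:ℚ) = 2*n+2-m := by rw [hm]; ring
    rw [hk']
    field_simp [hd, h2n1]
    ring
  rcases Nat.lt_or_ge k (2*n+2) with hk2 | hk2
  · -- k = 2n+1
    have hkeq : k = 2*n+1 := by omega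
    subst hkeq
    have c1 : (2*n).choose (2*n+1) = 0 := Nat.choose_eq_zero_of_lt (by omega)
    have c3 : (2*n+2).choose (2*n+1) = 2*n+2 := Nat.choose_succ_self_right (2*n+1)
    have c2a : (2*n+1).choose (2*n+1) = 1 := Nat.choose_self _
    have c2b : (2*n+1).choose (2*n) = 2*n+1 := Nat.choose_succ_self_right (2*n)
    show _ = g n (2*n+1+1) - g n (2*n+1)
    simp only [g, c1, c3]
    rw [show 2*n+1 = (2*n)+1 from rfl] at *
    simp only [Nat.add_sub_cancel, c2a, c2b]
    have hm : ((-1:ℚ))^(2*n+1) = -1 := by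
      rw [pow_succ, pow_mul]; norm_num
    have hm2 : ((-1:ℚ))^(2*n+1+1) = 1 := by
      rw [pow_succ, hm]; norm_num
    rw [hm, hm2]
    push_cast
    unfold Q2
    field_simp
    ring
  rcases Nat.lt_or_ge k (2*n+3) with hk3 | hk3
  · -- k = 2n+2
    have hkeq : k = 2*n+2 := by omega
    subst hkeq
    have c1 : (2*n).choose (2*n+2) = 0 := Nat.choose_eq_zero_of_lt (by omega)
    have c3 : (2*n+2).choose (2*n+2) = 1 := Nat.choose_self _
    have cg1 : (2*n+1).choose (2*n+2) = 0 := Nat.choose_eq_zero_of_lt (by omega)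
    have cg0 : (2*n+1).choose (2*n+1) = 1 := Nat.choose_self _
    show _ = g n (2*n+2+1) - g n (2*n+2)
    simp only [g, c1, c3]
    rw [show 2*n+2 = (2*n+1)+1 from rfl] at *
    simp only [Nat.add_sub_cancel, cg1, cg0]
    have hm2 : ((-1:ℚ))^(2*n+1+1) = 1 := by
      rw [pow_succ, pow_succ, pow_mul]; norm_num
    have hm3 : ((-1:ℚ))^(2*n+1+1+1) = -1 := by rw [pow_succ, hm2]; norm_num
    rw [hm2, hm3]
    push_cast
    unfold Q2
    field_simp
    ring
  · -- k ≥ 2n+3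
    have c1 : (2*n).choose k = 0 := Nat.choose_eq_zero_of_lt (by omega)
    have c3 : (2*n+2).choose k = 0 := Nat.choose_eq_zero_of_lt (by omega)
    obtain ⟨j, rfl⟩ := Nat.exists_eq_succ_of_ne_zero (show k ≠ 0 by omega)
    have cg1 : (2*n+1).choose (j+1) = 0 := Nat.choose_eq_zero_of_lt (by omega)
    have cg0 : (2*n+1).choose j = 0 := Nat.choose_eq_zero_of_lt (by omega)
    show _ = g n (j+1+1) - g n (j+1)
    simp only [g, c1, c3, cg1, cg0]
    push_cast
    ring

lemma arec (n : ℕ) :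
    ((n:ℚ)+1)^2 * a (n+1) + (3*(3*(n:ℚ)+1)*(3*(n:ℚ)+2)) * a n = 0 := by
  have ht : ∑ k ∈ range (2*n+3), (g n (k+1) - g n k) = 0 := by
    rw [Finset.sum_range_sub]
    have hz : (2*n+1).choose (2*n+2) = 0 := Nat.choose_eq_zero_of_lt (by omega)
    show g n (2*n+2+1) - g n 0 = 0
    simp [g, hz]
  have hsum : ∑ k ∈ range (2*n+3),
      (((n:ℚ)+1)^2 * (-1)^k * ((2*n+2).choose k : ℚ)^3
        + 3*(3*(n:ℚ)+1)*(3*(n:ℚ)+2) * (-1)^k * ((2*n).choose k : ℚ)^3) = 0 := by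
    rw [Finset.sum_congr rfl (fun k _ => key n k)]; exact ht
  rw [Finset.sum_add_distrib] at hsum
  have e1 : ∑ k ∈ range (2*n+3), ((n:ℚ)+1)^2 * (-1)^k * ((2*n+2).choose k:ℚ)^3
      = ((n:ℚ)+1)^2 * a (n+1) := by
    rw [a, show 2*(n+1)+1 = 2*n+3 by ring, show 2*(n+1) = 2*n+2 by ring, Finset.mul_sum]
    exact Finset.sum_congr rfl (fun k _ => by ring)
  have e2 : ∑ k ∈ range (2*n+3), 3*(3*(n:ℚ)+1)*(3*(n:ℚ)+2) * (-1)^k * ((2*n).choose k:ℚ)^3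
      = (3*(3*(n:ℚ)+1)*(3*(n:ℚ)+2)) * a n := by
    rw [a, Finset.mul_sum]
    rw [show 2*n+3 = (2*n+2)+1 by ring, Finset.sum_range_succ,
      show 2*n+2 = (2*n+1)+1 by ring, Finset.sum_range_succ]
    have z1 : (2*n).choose (2*n+1) = 0 := Nat.choose_eq_zero_of_lt (by omega)
    have z2 : (2*n).choose (2*n+2) = 0 := Nat.choose_eq_zero_of_lt (by omega)
    rw [z1, z2]
    push_cast
    norm_num
    exact Finset.sum_congr rfl (fun k _ => by ring)
  rw [e1, e2] at hsum
  exact hsum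

lemma aval (n : ℕ) : a n = (-1)^n * ((3*n).factorial : ℚ) / ((n.factorial : ℚ))^3 := by
  induction n with
  | zero => simp [a]
  | succ m ih =>
    have hrec := arec m
    rw [ih] at hrec
    have h1 : ((m:ℚ)+1) ≠ 0 := by positivity
    have hf : ((m.factorial : ℚ)) ≠ 0 := Nat.cast_ne_zero.2 m.factorial_ne_zero
    have hfs : ((3*(m+1)).factorial : ℚ)
        = ((3*m+3) * ((3*m+2) * ((3*m+1) * (3*m).factorial)) : ℕ) := by
      rw [show 3*(m+1) = (3*m+2)+1 by ring, Nat.factorial_succ,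
        show (3*m+2) = (3*m+1)+1 by ring, Nat.factorial_succ,
        show (3*m+1) = (3*m)+1 by ring, Nat.factorial_succ]
    have hsolve : a (m+1)
        = -(3*(3*(m:ℚ)+1)*(3*(m:ℚ)+2)) * ((-1)^m * ((3*m).factorial:ℚ) / ((m.factorial:ℚ))^3)
            / ((m:ℚ)+1)^2 := by
      field_simp at hrec ⊢
      linarith
    rw [hsolve, hfs, Nat.factorial_succ]
    push_cast
    field_simp
    ring

/-- Dixon's identity: `∑_{k=-n}^{n} (-1)^k C(2n, n+k)^3 = (3n)!/(n!)^3`. -/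
theorem stmt14 (n : ℕ) (hn : 1 ≤ n) :
    ∑ k ∈ Finset.Icc (-(n : ℤ)) (n : ℤ),
        (-1 : ℚ) ^ k * (Nat.choose (2 * n) ((n : ℤ) + k).toNat : ℚ) ^ 3 =
      (Nat.factorial (3 * n) : ℚ) / (Nat.factorial n : ℚ) ^ 3 := by
  have hinv : ((-1:ℚ)^n)⁻¹ = (-1)^n := by
    have : ((-1:ℚ)^n) * ((-1:ℚ)^n) = 1 := by
      rw [← pow_add, ← two_mul, pow_mul]; norm_num
    exact inv_eq_of_mul_eq_one_right this
  have hre : ∑ k ∈ Finset.Icc (-(n : ℤ)) (n : ℤ),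
        (-1 : ℚ) ^ k * (Nat.choose (2 * n) ((n : ℤ) + k).toNat : ℚ) ^ 3
      = ∑ j ∈ range (2*n+1), (-1:ℚ)^n * ((-1:ℚ)^j * ((2*n).choose j : ℚ)^3) := by
    apply Finset.sum_nbij' (i := fun k : ℤ => ((n:ℤ) + k).toNat)
      (j := fun j : ℕ => (j : ℤ) - n)
    · intro k hk
      simp only [Finset.mem_Icc] at hk
      simp only [Finset.mem_range]
      omega
    · intro j hj
      simp only [Finset.mem_range] at hj
      simp only [Finset.mem_Icc]
      omega
    · intro k hk
      simp only [Finset.mem_Icc] at hk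
      omega
    · intro j hj
      simp only [Finset.mem_range] at hj
      omega
    · intro k hk
      simp only [Finset.mem_Icc] at hk
      have h1 : (((n:ℤ)+k).toNat : ℤ) = (n:ℤ) + k := by omega
      have h2 : (-1:ℚ)^k = (-1:ℚ)^n * (-1:ℚ)^(((n:ℤ)+k).toNat) := by
        have : (-1:ℚ)^(((n:ℤ)+k).toNat) = (-1:ℚ)^((n:ℤ)+k) := by
          rw [← zpow_natCast, h1]
        rw [this, zpow_add₀ (by norm_num : (-1:ℚ) ≠ 0), zpow_natCast]
        rw [show (-1:ℚ)^n * ((-1:ℚ)^n * (-1:ℚ)^k) = ((-1:ℚ)^n * (-1:ℚ)^n) * (-1:ℚ)^k by ring,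
          ← pow_add, ← two_mul, pow_mul]
        norm_num
      rw [h2]; ring
  rw [hre, ← Finset.mul_sum, ← a, aval]
  rw [show (-1:ℚ)^n * ((-1:ℚ)^n * ((3*n).factorial : ℚ) / ((n.factorial:ℚ))^3)
      = ((-1:ℚ)^n * (-1:ℚ)^n) * ((3*n).factorial : ℚ) / ((n.factorial:ℚ))^3 by ring,
    ← pow_add, ← two_mul, pow_mul]
  norm_num
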